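/- Let A be a commutative ℚ-algebra and let ℓ, ℓ' ∈ A and L_1,…,L_n, L'_1,…,L'_n ∈ A satisfy ℓ' = -ℓ and L_k + (-1)^k L'_k = ((-1)^k / k!) ℓ^k for all 1 ≤ k ≤ n. If a_1,…,a_n ∈ ℚ satisfy a_n = 1 and Σ_{m=1}^n a_m (-1)^m / m! = 0, then Σ_{m=1}^n a_m L_m ℓ^{n-m} + (-1)^n Σ_{m=1}^n a_m L'_m (ℓ')^{n-m} = 0. -/
import Mathlib


theorem stmt0 {A : Type*} [CommRing A] [Algebra ℚ A]
    (n : ℕ) (ℓ ℓ' : A) (L L' : ℕ → A)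
    (hℓ : ℓ' = -ℓ)
    (hfe : ∀ k ∈ Finset.Icc 1 n,
      L k + (-1 : A) ^ k * L' k = ((-1 : ℚ) ^ k / (Nat.factorial k : ℚ)) • ℓ ^ k)
    (a : ℕ → ℚ) (han : a n = 1)
    (hsum : ∑ m ∈ Finset.Icc 1 n, a m * (-1) ^ m / (Nat.factorial m : ℚ) = 0) :
    (∑ m ∈ Finset.Icc 1 n, a m • (L m * ℓ ^ (n - m)))
      + (-1 : A) ^ n * ∑ m ∈ Finset.Icc 1 n, a m • (L' m * ℓ' ^ (n - m)) = 0 := by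
  subst hℓ
  rw [Finset.mul_sum, ← Finset.sum_add_distrib]
  have key : ∀ m ∈ Finset.Icc 1 n,
      a m • (L m * ℓ ^ (n - m)) + (-1 : A) ^ n * (a m • (L' m * (-ℓ) ^ (n - m)))
        = (a m * (-1) ^ m / (Nat.factorial m : ℚ)) • ℓ ^ n := by
    intro m hm
    obtain ⟨h1, h2⟩ := Finset.mem_Icc.mp hm
    have hk := hfe m hm
    have hpow : (-ℓ) ^ (n - m) = (-1 : A) ^ (n - m) * ℓ ^ (n - m) := by
      rw [neg_pow]
    have hsign : (-1 : A) ^ n * (-1 : A) ^ (n - m) = (-1 : A) ^ m := by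
      rw [← pow_add]
      have h3 : n + (n - m) = m + 2 * (n - m) := by omega
      rw [h3, pow_add, pow_mul]
      simp
    have hℓn : ℓ ^ m * ℓ ^ (n - m) = ℓ ^ n := by
      rw [← pow_add]; congr 1; omega
    calc a m • (L m * ℓ ^ (n - m)) + (-1 : A) ^ n * (a m • (L' m * (-ℓ) ^ (n - m)))
        = a m • ((L m + (-1 : A) ^ n * (-1 : A) ^ (n - m) * L' m) * ℓ ^ (n - m)) := by
          rw [hpow, mul_smul_comm, ← smul_add]
          congr 1
          ring
      _ = a m • ((L m + (-1 : A) ^ m * L' m) * ℓ ^ (n - m)) := by rw [hsign]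
      _ = a m • ((((-1 : ℚ) ^ m / (Nat.factorial m : ℚ)) • ℓ ^ m) * ℓ ^ (n - m)) := by
          rw [hk]
      _ = (a m * (-1) ^ m / (Nat.factorial m : ℚ)) • ℓ ^ n := by
          rw [smul_mul_assoc, hℓn, smul_smul]
          congr 1
          ring
  rw [Finset.sum_congr rfl key, ← Finset.sum_smul, hsum, zero_smul]
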